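/- Let p be a prime not dividing 60, let S be a generating set of G = A₅ × ℤ/pℤ, and let a ∈ S. If the image of S \ {a} under the projection to A₅ generates A₅ and a ∉ ⟨S \ {a}⟩, then ⟨S \ {a}⟩ = A₅ × {0}. -/

import Mathlib

open scoped commutatorElement

theorem closure_erase_eq_A5 (p : ℕ) (hp : p.Prime) (hp60 : ¬ p ∣ 60)
    (S : Set (alternatingGroup (Fin 5) × Multiplicative (ZMod p)))
    (hS : Subgroup.closure S = ⊤)
    (a : alternatingGroup (Fin 5) × Multiplicative (ZMod p)) (ha : a ∈ S)
    (hproj : Subgroup.closure (Prod.fst '' (S \ {a})) = (⊤ : Subgroup (alternatingGroup (Fin 5))))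
    (hna : a ∉ Subgroup.closure (S \ {a})) :
    Subgroup.closure (S \ {a}) =
      Subgroup.prod (⊤ : Subgroup (alternatingGroup (Fin 5)))
        (⊥ : Subgroup (Multiplicative (ZMod p))) := by
  set H := Subgroup.closure (S \ {a}) with hH
  -- first projection of H is ⊤
  have hmap : Subgroup.map (MonoidHom.fst (alternatingGroup (Fin 5)) (Multiplicative (ZMod p))) H = ⊤ := by
    rw [hH, MonoidHom.map_closure, MonoidHom.coe_fst]
    exact hproj
  -- A5 is perfect
  have hperf : commutator (alternatingGroup (Fin 5)) = ⊤ := by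
    rcases (Subgroup.commutator_normal (⊤ : Subgroup (alternatingGroup (Fin 5))) ⊤).eq_bot_or_eq_top with hb | ht
    · exfalso
      have hc : ∀ g h : alternatingGroup (Fin 5), g * h = h * g := by
        intro g h
        have hm := Subgroup.commutator_mem_commutator (Subgroup.mem_top g) (Subgroup.mem_top h)
        rw [hb] at hm
        exact commutatorElement_eq_one_iff_mul_comm.mp (Subgroup.mem_bot.mp hm)
      have hx : (finRotate 5 : Equiv.Perm (Fin 5)) ∈ alternatingGroup (Fin 5) := by
        rw [Equiv.Perm.mem_alternatingGroup]; decide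
      have hy : (c[0, 1, 2] : Equiv.Perm (Fin 5)) ∈ alternatingGroup (Fin 5) := by
        rw [Equiv.Perm.mem_alternatingGroup]; decide
      have h2 := hc ⟨finRotate 5, hx⟩ ⟨c[0, 1, 2], hy⟩
      rw [Subtype.ext_iff] at h2
      simp only [Subgroup.coe_mul, Submonoid.coe_mul, MulMemClass.coe_mul] at h2
      have h3 : (finRotate 5 : Equiv.Perm (Fin 5)) * c[0, 1, 2] ≠
          c[0, 1, 2] * finRotate 5 := by decide
      exact h3 h2
    · exact ht
  -- A5 × ⊥ ≤ H
  have hle : Subgroup.prod (⊤ : Subgroup (alternatingGroup (Fin 5))) (⊥ : Subgroup (Multiplicative (ZMod p))) ≤ H := by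
    rintro ⟨g, k⟩ hx
    simp only [Subgroup.mem_prod, Subgroup.mem_top, Subgroup.mem_bot, true_and] at hx
    subst hx
    have hg : g ∈ Subgroup.comap (MonoidHom.inl (alternatingGroup (Fin 5)) (Multiplicative (ZMod p))) H := by
      have hgc : g ∈ commutator (alternatingGroup (Fin 5)) := hperf ▸ Subgroup.mem_top g
      rw [commutator_def, Subgroup.commutator_def, Subgroup.mem_closure] at hgc
      refine hgc (Subgroup.comap (MonoidHom.inl (alternatingGroup (Fin 5)) (Multiplicative (ZMod p))) H) ?_
      rintro x ⟨g₁, -, g₂, -, rfl⟩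
      obtain ⟨x₁, hx₁, hx₁'⟩ : ∃ y ∈ H, (MonoidHom.fst (alternatingGroup (Fin 5)) (Multiplicative (ZMod p))) y = g₁ := by
        have : g₁ ∈ Subgroup.map (MonoidHom.fst (alternatingGroup (Fin 5)) (Multiplicative (ZMod p))) H := by
          rw [hmap]; trivial
        exact this
      obtain ⟨x₂, hx₂, hx₂'⟩ : ∃ y ∈ H, (MonoidHom.fst (alternatingGroup (Fin 5)) (Multiplicative (ZMod p))) y = g₂ := by
        have : g₂ ∈ Subgroup.map (MonoidHom.fst (alternatingGroup (Fin 5)) (Multiplicative (ZMod p))) H := by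
          rw [hmap]; trivial
        exact this
      have hmem : ⁅x₁, x₂⁆ ∈ H := by
        apply H.mul_mem (H.mul_mem (H.mul_mem hx₁ hx₂) (H.inv_mem hx₁)) (H.inv_mem hx₂)
      have heq : ⁅x₁, x₂⁆ = (MonoidHom.inl (alternatingGroup (Fin 5)) (Multiplicative (ZMod p))) ⁅g₁, g₂⁆ := by
        obtain ⟨a₁, b₁⟩ := x₁
        obtain ⟨a₂, b₂⟩ := x₂
        simp only [MonoidHom.coe_fst] at hx₁' hx₂'
        subst hx₁' hx₂'
        refine Prod.ext rfl ?_
        exact commutatorElement_eq_one_iff_mul_comm.mpr (mul_comm _ _)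
      rw [heq] at hmem
      exact hmem
    exact hg
  -- H = ⊤.prod K where K = snd image
  set K := Subgroup.map (MonoidHom.snd (alternatingGroup (Fin 5)) (Multiplicative (ZMod p))) H with hK
  have hHK : H = Subgroup.prod (⊤ : Subgroup (alternatingGroup (Fin 5))) K := by
    apply le_antisymm
    · intro x hx
      exact Subgroup.mem_prod.mpr ⟨Subgroup.mem_top _, ⟨x, hx, rfl⟩⟩
    · rintro ⟨g, k⟩ hx
      simp only [Subgroup.mem_prod, Subgroup.mem_top, true_and] at hx
      obtain ⟨⟨g₀, k₀⟩, hg₀, hk₀⟩ := hx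
      simp only [MonoidHom.coe_snd] at hk₀
      subst hk₀
      have h1 : ((g * g₀⁻¹, 1) : alternatingGroup (Fin 5) × Multiplicative (ZMod p)) ∈ H := hle (Subgroup.mem_prod.mpr ⟨Subgroup.mem_top _, Subgroup.mem_bot.mpr rfl⟩)
      have h2 := H.mul_mem h1 hg₀
      simpa using h2
  -- K = ⊥ or ⊤
  have : NeZero p := ⟨hp.ne_zero⟩
  have hfact : Fact (Nat.card (Multiplicative (ZMod p))).Prime := by
    constructor
    simpa [Nat.card_eq_fintype_card] using hp
  rcases K.eq_bot_or_eq_top_of_prime_card with h | h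
  · rw [hHK, h]
  · exfalso
    apply hna
    rw [hHK, h]
    exact Subgroup.mem_prod.mpr ⟨Subgroup.mem_top _, Subgroup.mem_top _⟩
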